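/- arXiv:2104.01391 — 2 statements merged into one kernel-verified Lean document; each statement's English description precedes it below -/
import Mathlib

section
/- Setting q = 1 in the hook-length-type formula for Dyck paths: for a Dyck path λ of size n, the integer n! / ∏_{c ∈ Chord(λ)} l(c) is a positive integer (it counts cover-inclusive Dyck tilings above λ). -/
/-- Height of the lattice path after the first `k` steps of `w`
(`true` = up step `U`, `false` = down step `D`). -/
def prefixHeight (w : List Bool) (k : ℕ) : ℤ :=
  ((w.take k).count true : ℤ) - ((w.take k).count false : ℤ)

/-- `w` is a Dyck word of size `n`: a balanced word of length `2n` in `U,D`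
all of whose prefix heights are nonnegative. -/
def IsDyckWord (w : List Bool) (n : ℕ) : Prop :=
  w.length = 2 * n ∧ w.count true = n ∧ ∀ k ≤ w.length, 0 ≤ prefixHeight w k

/-- Positions `i < j` form a chord of `w`: the `U` at position `i` is matched with
the `D` at position `j` in the parenthesis matching, i.e. the heights before step `i`
and after step `j` agree and the path stays strictly above that level in between. -/
def IsChord (w : List Bool) (i j : ℕ) : Prop :=
  i < j ∧ j < w.length ∧ w.getD i false = true ∧ w.getD j true = false ∧
    prefixHeight w i = prefixHeight w (j + 1) ∧
    ∀ k, i < k → k ≤ j → prefixHeight w i < prefixHeight w k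

open scoped Classical in
/-- The set of chords of `w`, given by the matching of parentheses. -/
noncomputable def chords (w : List Bool) : Finset (ℕ × ℕ) :=
  (Finset.range w.length ×ˢ Finset.range w.length).filter fun p => IsChord w p.1 p.2

open scoped Classical in
/-- The length `l(c)` of a chord `c`: the number of chords weakly nested inside `c`,
i.e. one plus the number of chords strictly nested inside `c`. -/
noncomputable def chordLength (w : List Bool) (c : ℕ × ℕ) : ℕ :=
  ((chords w).filter fun p => c.1 ≤ p.1 ∧ p.2 ≤ c.2).card

namespace DyckAux
open scoped Classical

def step (b : Bool) : ℤ := if b then 1 else -1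

lemma count_sub (l : List Bool) :
    (l.count true : ℤ) - l.count false = (l.map step).sum := by
  induction l with
  | nil => simp
  | cons a l ih => cases a <;> simp [step, List.count_cons, ← ih] <;> push_cast <;> ring

lemma prefixHeight_eq (w : List Bool) (k : ℕ) :
    prefixHeight w k = ((w.take k).map step).sum := count_sub _

@[simp] lemma prefixHeight_zero (w : List Bool) : prefixHeight w 0 = 0 := by
  simp [prefixHeight]

lemma prefixHeight_cons (x : Bool) (w : List Bool) (k : ℕ) :
    prefixHeight (x :: w) (k + 1) = step x + prefixHeight w k := by
  simp [prefixHeight_eq, List.take_succ_cons]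

lemma prefixHeight_append_left (a b : List Bool) (k : ℕ) (h : k ≤ a.length) :
    prefixHeight (a ++ b) k = prefixHeight a k := by
  simp [prefixHeight, List.take_append_of_le_length h]

lemma prefixHeight_append_right (a b : List Bool) (k : ℕ) :
    prefixHeight (a ++ b) (a.length + k) = prefixHeight a a.length + prefixHeight b k := by
  simp [prefixHeight_eq, List.take_append]
  rw [List.take_of_length_le (by simp)]

lemma prefixHeight_length (w : List Bool) :
    prefixHeight w w.length = (w.count true : ℤ) - w.count false := by
  simp [prefixHeight]

lemma prefixHeight_succ (w : List Bool) (k : ℕ) (h : k < w.length) (d : Bool) :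
    prefixHeight w (k + 1) = prefixHeight w k + step (w.getD k d) := by
  have h2 : k < (w.map step).length := by simpa using h
  rw [prefixHeight_eq, prefixHeight_eq, List.map_take, List.map_take,
    List.take_succ, List.getElem?_eq_getElem h2, List.getD_eq_getElem w d h]
  simp

lemma prefixHeight_take (w : List Bool) (p k : ℕ) (h : k ≤ p) :
    prefixHeight (w.take p) k = prefixHeight w k := by
  simp [prefixHeight, List.take_take, Nat.min_eq_left h]


lemma isDyck_of (w : List Bool) (hbal : prefixHeight w w.length = 0)
    (hnn : ∀ k ≤ w.length, 0 ≤ prefixHeight w k) : IsDyckWord w (w.count true) := by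
  have h1 := List.count_true_add_count_false w
  rw [prefixHeight_length] at hbal
  refine ⟨by omega, rfl, hnn⟩

lemma decomp (n : ℕ) (w : List Bool) (hw : IsDyckWord w (n + 1)) :
    ∃ (m k : ℕ) (v u : List Bool), m + k = n ∧ IsDyckWord v m ∧ IsDyckWord u k ∧
      w = true :: v ++ false :: u := by
  obtain ⟨hlen, hcount, hnn⟩ := hw
  have hfalse : w.count false = n + 1 := by
    have := List.count_true_add_count_false w; omega
  have hbal : prefixHeight w w.length = 0 := by
    rw [prefixHeight_length, hcount, hfalse]; ring
  obtain ⟨b, t, rfl⟩ : ∃ b t, w = b :: t := by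
    cases w with
    | nil => simp at hlen
    | cons b t => exact ⟨b, t, rfl⟩
  have hb : b = true := by
    have h1 := hnn 1 (by simp)
    rw [show (1:ℕ) = 0 + 1 by rfl, prefixHeight_cons] at h1
    cases b
    · simp [step] at h1
    · rfl
  subst hb
  have hP : ∃ j, 1 ≤ j ∧ prefixHeight (true :: t) j = 0 :=
    ⟨(true :: t).length, by simp, hbal⟩
  set j := Nat.find hP with hjdef
  obtain ⟨hj1, hj0⟩ : 1 ≤ j ∧ prefixHeight (true :: t) j = 0 := Nat.find_spec hP
  have hjle : j ≤ (true :: t).length := Nat.find_min' hP ⟨by simp, hbal⟩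
  have hmin : ∀ p, 1 ≤ p → p < j → prefixHeight (true :: t) p ≠ 0 := by
    intro p h1 h2 hp
    exact Nat.find_min hP h2 ⟨h1, hp⟩
  have hpos : ∀ p, 1 ≤ p → p < j → 1 ≤ prefixHeight (true :: t) p := by
    intro p h1 h2
    have := hnn p (le_trans (le_of_lt h2) hjle)
    have := hmin p h1 h2
    omega
  have hj2 : 2 ≤ j := by
    have hne : j ≠ 1 := by
      intro h
      rw [h, show (1:ℕ) = 0 + 1 from rfl, prefixHeight_cons] at hj0
      simp [step] at hj0
    omega
  have hstep := prefixHeight_succ (true :: t) (j-1) (by omega) false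
  rw [show j - 1 + 1 = j by omega] at hstep
  have hht1 : prefixHeight (true :: t) (j - 1) = 1 := by
    have := hpos (j-1) (by omega) (by omega)
    have hs : step ((true :: t).getD (j-1) false) = 1 ∨
        step ((true :: t).getD (j-1) false) = -1 := by
      cases (true :: t).getD (j-1) false <;> simp [step]
    omega
  have hgd : (true :: t).getD (j - 1) false = false := by
    cases hg : (true :: t).getD (j-1) false
    · rfl
    · rw [hg] at hstep; simp [step] at hstep; omega
  set v := t.take (j - 2) with hvdef
  set u := t.drop (j - 1) with hudef
  have htl : t.length = 2 * n + 1 := by simp at hlen; omega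
  have hvlen : v.length = j - 2 := by
    rw [hvdef, List.length_take]; simp at hjle; omega
  have htj : t[j-2]'(by omega) = false := by
    have : (true :: t).getD ((j-2) + 1) false = t.getD (j-2) false := by
      simp [List.getD_cons_succ]
    rw [show j - 2 + 1 = j - 1 by omega] at this
    rw [hgd] at this
    rw [List.getD_eq_getElem t false (by omega)] at this
    exact this.symm
  have hsplit : t = v ++ false :: u := by
    conv_lhs => rw [← List.take_append_drop (j-2) t]
    rw [List.drop_eq_getElem_cons (show j - 2 < t.length by omega), htj,
      show j - 2 + 1 = j - 1 by omega]
  have hvh : ∀ p ≤ j - 2, prefixHeight v p = prefixHeight (true :: t) (p + 1) - 1 := by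
    intro p hp
    rw [hvdef, prefixHeight_take t (j - 2) p hp, prefixHeight_cons]
    simp [step]
  have hvbal : prefixHeight v v.length = 0 := by
    rw [hvlen, hvh (j - 2) le_rfl, show j - 2 + 1 = j - 1 by omega, hht1]; ring
  have hvnn : ∀ p ≤ v.length, 0 ≤ prefixHeight v p := by
    intro p hp
    rw [hvlen] at hp
    rw [hvh p hp]
    have := hpos (p + 1) (by omega) (by omega)
    omega
  have hvd : IsDyckWord v (v.count true) := isDyck_of v hvbal hvnn
  have hcons : true :: t = (true :: v ++ [false]) ++ u := by
    rw [hsplit]; simp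
  have halen : (true :: v ++ [false]).length = j := by
    simp [hvlen]; omega
  have ha0 : prefixHeight (true :: v ++ [false]) j = 0 := by
    have h := prefixHeight_append_left (true :: v ++ [false]) u j (le_of_eq halen.symm)
    rw [← hcons] at h
    rw [← h]; exact hj0
  have huh : ∀ p, prefixHeight u p = prefixHeight (true :: t) (j + p) := by
    intro p
    conv_rhs => rw [hcons]
    have h := prefixHeight_append_right (true :: v ++ [false]) u p
    rw [halen, ha0] at h
    omega
  have hulen : j + u.length = (true :: t).length := by
    rw [hudef]; simp at hjle ⊢; omega
  have hubal : prefixHeight u u.length = 0 := by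
    rw [huh u.length, hulen]; exact hbal
  have hunn : ∀ p ≤ u.length, 0 ≤ prefixHeight u p := by
    intro p hp
    rw [huh p]
    exact hnn _ (by omega)
  have hud : IsDyckWord u (u.count true) := isDyck_of u hubal hunn
  have hcnt : v.count true + u.count true = n := by
    have h : (true :: t).count true = 1 + v.count true + u.count true := by
      rw [hsplit]
      simp [List.count_cons, List.count_append]
      omega
    omega
  exact ⟨v.count true, u.count true, v, u, hcnt, hvd, hud, by rw [hsplit]; simp⟩

lemma bal (w : List Bool) (n : ℕ) (hw : IsDyckWord w n) :
    prefixHeight w w.length = 0 := by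
  obtain ⟨hlen, hcount, -⟩ := hw
  have := List.count_true_add_count_false w
  rw [prefixHeight_length]
  omega

section Decomp

variable (m k : ℕ) (v u : List Bool)

lemma wlen : (true :: v ++ false :: u).length = v.length + 2 + u.length := by
  simp
  omega

lemma H1 (p : ℕ) (hp : p ≤ v.length) :
    prefixHeight (true :: v ++ false :: u) (p + 1) = 1 + prefixHeight v p := by
  show prefixHeight (true :: (v ++ false :: u)) (p + 1) = _
  rw [prefixHeight_cons, prefixHeight_append_left v (false :: u) p hp]
  simp [step]

lemma Hmid (hv : IsDyckWord v m) :
    prefixHeight (true :: v ++ false :: u) (v.length + 2) = 0 := by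
  have h : (true :: v).length = v.length + 1 := by simp
  have h2 := prefixHeight_append_right (true :: v) (false :: u) 1
  rw [h] at h2
  show prefixHeight ((true :: v) ++ (false :: u)) (v.length + 2) = 0
  rw [show v.length + 2 = v.length + 1 + 1 from rfl, h2]
  have h3 : prefixHeight (true :: v) (v.length + 1) = 1 + prefixHeight v v.length := by
    rw [prefixHeight_cons]; simp [step]
  rw [h3, bal v m hv]
  rw [show (1:ℕ) = 0 + 1 from rfl, prefixHeight_cons]
  simp [step]

lemma H2 (hv : IsDyckWord v m) (p : ℕ) :
    prefixHeight (true :: v ++ false :: u) (v.length + 2 + p) = prefixHeight u p := by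
  have hc : true :: v ++ false :: u = (true :: v ++ [false]) ++ u := by simp
  have halen : (true :: v ++ [false]).length = v.length + 2 := by simp
  have h := prefixHeight_append_right (true :: v ++ [false]) u p
  rw [halen] at h
  have h0 : prefixHeight (true :: v ++ [false]) (v.length + 2) = 0 := by
    have h1 := prefixHeight_append_left (true :: v ++ [false]) u (v.length + 2)
      (le_of_eq halen.symm)
    rw [← hc] at h1
    rw [← h1]
    exact Hmid m v u hv
  rw [hc, h, h0, zero_add]

lemma gd0 (d : Bool) : (true :: v ++ false :: u).getD 0 d = true := rfl

lemma gdv (d : Bool) (p : ℕ) (hp : p < v.length) :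
    (true :: v ++ false :: u).getD (p + 1) d = v.getD p d := by
  show (true :: (v ++ false :: u)).getD (p + 1) d = _
  rw [List.getD_cons_succ]
  exact List.getD_append v (false :: u) d p hp

lemma gdL (d : Bool) : (true :: v ++ false :: u).getD (v.length + 1) d = false := by
  show (true :: (v ++ false :: u)).getD (v.length + 1) d = false
  rw [List.getD_cons_succ, List.getD_append_right v (false :: u) d v.length le_rfl]
  simp

lemma gdu (d : Bool) (p : ℕ) :
    (true :: v ++ false :: u).getD (v.length + 2 + p) d = u.getD p d := by
  show (true :: (v ++ false :: u)).getD (v.length + 2 + p) d = _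
  rw [show v.length + 2 + p = (v.length + 1 + p) + 1 by omega]
  rw [List.getD_cons_succ,
    List.getD_append_right v (false :: u) d (v.length + 1 + p) (by omega)]
  rw [show v.length + 1 + p - v.length = p + 1 by omega, List.getD_cons_succ]

end Decomp

lemma isChord_iff (m k : ℕ) (v u : List Bool) (hv : IsDyckWord v m) (hu : IsDyckWord u k)
    (i j : ℕ) :
    IsChord (true :: v ++ false :: u) i j ↔
      (i = 0 ∧ j = v.length + 1) ∨
      (∃ p q, IsChord v p q ∧ i = p + 1 ∧ j = q + 1) ∨
      (∃ p q, IsChord u p q ∧ i = p + (v.length + 2) ∧ j = q + (v.length + 2)) := by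
  set w := true :: v ++ false :: u with hwdef
  set L := v.length with hLdef
  have hwl : w.length = L + 2 + u.length := wlen v u
  have hvnn : ∀ p ≤ L, 0 ≤ prefixHeight v p := fun p hp => hv.2.2 p hp
  have hunn : ∀ p ≤ u.length, 0 ≤ prefixHeight u p := fun p hp => hu.2.2 p hp
  constructor
  · rintro ⟨hij, hjlen, hgi, hgj, heq, hstrict⟩
    rcases show i = 0 ∨ (1 ≤ i ∧ i ≤ L) ∨ i = L + 1 ∨ L + 2 ≤ i by omega with
      h | ⟨h1, h2⟩ | h | h
    · subst h
      left
      refine ⟨rfl, ?_⟩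
      have hj1 : ¬ j ≤ L := by
        intro hj
        rw [prefixHeight_zero, H1 v u j hj] at heq
        have := hvnn j hj
        omega
      have hj2 : ¬ L + 2 ≤ j := by
        intro hj
        have := hstrict (L + 2) (by omega) hj
        rw [prefixHeight_zero, Hmid m v u hv] at this
        omega
      omega
    · right; left
      obtain ⟨p, rfl⟩ : ∃ p, i = p + 1 := ⟨i - 1, by omega⟩
      have hpL : p < L := by omega
      have hjL : j ≤ L := by
        by_contra hj
        have hs := hstrict (L + 1) (by omega) (by omega)
        rw [H1 v u p (by omega), H1 v u L le_rfl, bal v m hv] at hs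
        have := hvnn p (by omega)
        omega
      obtain ⟨q, rfl⟩ : ∃ q, j = q + 1 := ⟨j - 1, by omega⟩
      have hqL : q < L := by omega
      refine ⟨p, q, ⟨by omega, by omega, ?_, ?_, ?_, ?_⟩, rfl, rfl⟩
      · rw [← gdv v u false p hpL]; exact hgi
      · rw [← gdv v u true q hqL]; exact hgj
      · have e1 := H1 v u p (by omega)
        have e2 := H1 v u (q + 1) (by omega)
        rw [e1, show q + 1 + 1 = q + 1 + 1 from rfl, e2] at heq
        omega
      · intro k' hk1 hk2
        have hs := hstrict (k' + 1) (by omega) (by omega)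
        rw [H1 v u p (by omega), H1 v u k' (by omega)] at hs
        omega
    · exfalso
      rw [h, gdL v u false] at hgi
      exact Bool.false_ne_true hgi
    · right; right
      obtain ⟨p, rfl⟩ : ∃ p, i = L + 2 + p := ⟨i - (L + 2), by omega⟩
      obtain ⟨q, rfl⟩ : ∃ q, j = L + 2 + q := ⟨j - (L + 2), by omega⟩
      have hqu : q < u.length := by omega
      refine ⟨p, q, ⟨by omega, hqu, ?_, ?_, ?_, ?_⟩, by omega, by omega⟩
      · rw [← gdu v u false p]; exact hgi
      · rw [← gdu v u true q]; exact hgj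
      · have e1 := H2 m v u hv p
        have e2 := H2 m v u hv (q + 1)
        rw [e1, show L + 2 + q + 1 = L + 2 + (q + 1) by omega, e2] at heq
        exact heq
      · intro k' hk1 hk2
        have hs := hstrict (L + 2 + k') (by omega) (by omega)
        rw [H2 m v u hv p, H2 m v u hv k'] at hs
        exact hs
  · rintro (⟨rfl, rfl⟩ | ⟨p, q, ⟨hpq, hql, hgp, hgq, hpheq, hpstrict⟩, rfl, rfl⟩ |
      ⟨p, q, ⟨hpq, hql, hgp, hgq, hpheq, hpstrict⟩, rfl, rfl⟩)
    · refine ⟨by omega, by omega, gd0 v u false, gdL v u true, ?_, ?_⟩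
      · rw [prefixHeight_zero, show L + 1 + 1 = L + 2 from rfl, Hmid m v u hv]
      · intro k' hk1 hk2
        obtain ⟨p, rfl⟩ : ∃ p, k' = p + 1 := ⟨k' - 1, by omega⟩
        rw [prefixHeight_zero, H1 v u p (by omega)]
        have := hvnn p (by omega)
        omega
    · refine ⟨by omega, by omega, ?_, ?_, ?_, ?_⟩
      · rw [gdv v u false p (by omega)]; exact hgp
      · rw [gdv v u true q (by omega)]; exact hgq
      · rw [H1 v u p (by omega), show q + 1 + 1 = (q + 1) + 1 from rfl,
          H1 v u (q + 1) (by omega)]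
        omega
      · intro k' hk1 hk2
        obtain ⟨k'', rfl⟩ : ∃ p, k' = p + 1 := ⟨k' - 1, by omega⟩
        rw [H1 v u p (by omega), H1 v u k'' (by omega)]
        have := hpstrict k'' (by omega) (by omega)
        omega
    · refine ⟨by omega, by omega, ?_, ?_, ?_, ?_⟩
      · rw [show p + (L + 2) = L + 2 + p by omega, gdu v u false p]; exact hgp
      · rw [show q + (L + 2) = L + 2 + q by omega, gdu v u true q]; exact hgq
      · rw [show p + (L + 2) = L + 2 + p by omega, H2 m v u hv p,
          show q + (L + 2) + 1 = L + 2 + (q + 1) by omega, H2 m v u hv (q + 1)]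
        exact hpheq
      · intro k' hk1 hk2
        obtain ⟨k'', rfl⟩ : ∃ x, k' = L + 2 + x := ⟨k' - (L + 2), by omega⟩
        rw [show p + (L + 2) = L + 2 + p by omega, H2 m v u hv p, H2 m v u hv k'']
        exact hpstrict k'' (by omega) (by omega)

lemma mem_chords (w : List Bool) (c : ℕ × ℕ) :
    c ∈ chords w ↔ IsChord w c.1 c.2 := by
  simp only [chords, Finset.mem_filter, Finset.mem_product, Finset.mem_range]
  constructor
  · rintro ⟨-, h⟩; exact h
  · intro h
    refine ⟨⟨?_, h.2.1⟩, h⟩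
    have h1 := h.1
    have h2 := h.2.1
    omega

lemma inj_shift (a : ℕ) : Function.Injective (fun p : ℕ × ℕ => (p.1 + a, p.2 + a)) := by
  rintro ⟨x1, x2⟩ ⟨y1, y2⟩ h
  simp only [Prod.mk.injEq] at h
  ext <;> omega

lemma chords_decomp (m k : ℕ) (v u : List Bool) (hv : IsDyckWord v m) (hu : IsDyckWord u k) :
    chords (true :: v ++ false :: u) =
      insert ((0 : ℕ), v.length + 1)
        (((chords v).image fun p => (p.1 + 1, p.2 + 1)) ∪
         ((chords u).image fun p => (p.1 + (v.length + 2), p.2 + (v.length + 2)))) := by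
  ext ⟨i, j⟩
  rw [mem_chords, isChord_iff m k v u hv hu]
  simp only [Finset.mem_insert, Finset.mem_union, Finset.mem_image, mem_chords, Prod.mk.injEq]
  constructor
  · rintro (⟨h1, h2⟩ | ⟨p, q, hc, h1, h2⟩ | ⟨p, q, hc, h1, h2⟩)
    · exact Or.inl ⟨h1, h2⟩
    · exact Or.inr (Or.inl ⟨(p, q), hc, h1.symm, h2.symm⟩)
    · exact Or.inr (Or.inr ⟨(p, q), hc, h1.symm, h2.symm⟩)
  · rintro (⟨h1, h2⟩ | ⟨⟨p, q⟩, hc, h1, h2⟩ | ⟨⟨p, q⟩, hc, h1, h2⟩)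
    · exact Or.inl ⟨h1, h2⟩
    · exact Or.inr (Or.inl ⟨p, q, hc, h1.symm, h2.symm⟩)
    · exact Or.inr (Or.inr ⟨p, q, hc, h1.symm, h2.symm⟩)

lemma notmem_top (v u : List Bool) :
    ((0 : ℕ), v.length + 1) ∉
      (((chords v).image fun p => (p.1 + 1, p.2 + 1)) ∪
       ((chords u).image fun p => (p.1 + (v.length + 2), p.2 + (v.length + 2)))) := by
  simp only [Finset.mem_union, Finset.mem_image, Prod.mk.injEq]
  rintro (⟨p, hp, h1, h2⟩ | ⟨p, hp, h1, h2⟩) <;> omega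

lemma disj_parts (v u : List Bool) :
    Disjoint ((chords v).image fun p => (p.1 + 1, p.2 + 1))
      ((chords u).image fun p => (p.1 + (v.length + 2), p.2 + (v.length + 2))) := by
  rw [Finset.disjoint_left]
  rintro ⟨a, b⟩ h1 h2
  simp only [Finset.mem_image, Prod.mk.injEq] at h1 h2
  obtain ⟨p, hp, hp1, hp2⟩ := h1
  obtain ⟨q, hq, hq1, hq2⟩ := h2
  have hpl := ((mem_chords v p).1 hp).2.1
  omega

lemma card_chords : ∀ n, ∀ w : List Bool, IsDyckWord w n → (chords w).card = n := by
  intro n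
  induction n using Nat.strong_induction_on with
  | _ n ih =>
    intro w hw
    match n with
    | 0 =>
      have : w = [] := List.eq_nil_of_length_eq_zero (by rw [hw.1])
      subst this
      simp [chords]
    | n + 1 =>
      obtain ⟨m, k, v, u, hmk, hv, hu, rfl⟩ := decomp n w hw
      rw [chords_decomp m k v u hv hu, Finset.card_insert_of_notMem (notmem_top v u),
        Finset.card_union_of_disjoint (disj_parts v u),
        Finset.card_image_of_injective _ (inj_shift 1),
        Finset.card_image_of_injective _ (inj_shift (v.length + 2)),
        ih m (by omega) v hv, ih k (by omega) u hu]
      omega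

lemma chordLength_top (m k : ℕ) (v u : List Bool) (hv : IsDyckWord v m) (hu : IsDyckWord u k) :
    chordLength (true :: v ++ false :: u) (0, v.length + 1) = (chords v).card + 1 := by
  classical
  rw [chordLength, chords_decomp m k v u hv hu, Finset.filter_insert, if_pos (by simp),
    Finset.filter_union]
  have e1 : Finset.filter (fun p : ℕ × ℕ => ((0 : ℕ), v.length + 1).1 ≤ p.1 ∧
      p.2 ≤ ((0 : ℕ), v.length + 1).2) ((chords v).image fun p => (p.1 + 1, p.2 + 1)) =
      (chords v).image fun p => (p.1 + 1, p.2 + 1) := by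
    apply Finset.filter_true_of_mem
    rintro ⟨a, b⟩ hx
    simp only [Finset.mem_image, Prod.mk.injEq] at hx
    obtain ⟨p, hp, h1, h2⟩ := hx
    have := ((mem_chords v p).1 hp).2.1
    constructor <;> simp <;> omega
  have e2 : Finset.filter (fun p : ℕ × ℕ => ((0 : ℕ), v.length + 1).1 ≤ p.1 ∧
      p.2 ≤ ((0 : ℕ), v.length + 1).2)
      ((chords u).image fun p => (p.1 + (v.length + 2), p.2 + (v.length + 2))) = ∅ := by
    apply Finset.filter_false_of_mem
    rintro ⟨a, b⟩ hx ⟨h1, h2⟩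
    simp only [Finset.mem_image, Prod.mk.injEq] at hx
    obtain ⟨p, hp, e1, e2⟩ := hx
    simp at h2
    omega
  rw [e1, e2, Finset.union_empty,
    Finset.card_insert_of_notMem (by
      simp only [Finset.mem_image, Prod.mk.injEq]
      rintro ⟨p, hp, h1, h2⟩
      omega),
    Finset.card_image_of_injective _ (inj_shift 1)]

lemma chordLength_left (m k : ℕ) (v u : List Bool) (hv : IsDyckWord v m) (hu : IsDyckWord u k)
    (c : ℕ × ℕ) (hc : c ∈ chords v) :
    chordLength (true :: v ++ false :: u) (c.1 + 1, c.2 + 1) = chordLength v c := by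
  classical
  have hc2 : c.2 < v.length := ((mem_chords v c).1 hc).2.1
  rw [chordLength, chords_decomp m k v u hv hu, Finset.filter_insert,
    if_neg (by simp), Finset.filter_union]
  have e2 : Finset.filter (fun p : ℕ × ℕ => (c.1 + 1, c.2 + 1).1 ≤ p.1 ∧
      p.2 ≤ (c.1 + 1, c.2 + 1).2)
      ((chords u).image fun p => (p.1 + (v.length + 2), p.2 + (v.length + 2))) = ∅ := by
    apply Finset.filter_false_of_mem
    rintro ⟨a, b⟩ hx ⟨h1, h2⟩
    simp only [Finset.mem_image, Prod.mk.injEq] at hx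
    obtain ⟨p, hp, e1, e2⟩ := hx
    simp at h1 h2
    omega
  rw [e2, Finset.union_empty, Finset.filter_image,
    Finset.card_image_of_injective _ (inj_shift 1), chordLength]
  congr 1
  apply Finset.filter_congr
  intro x hx
  simp only [eq_iff_iff]
  constructor
  · rintro ⟨h1, h2⟩
    simp at h1 h2
    exact ⟨by omega, by omega⟩
  · rintro ⟨h1, h2⟩
    simp
    exact ⟨by omega, by omega⟩

lemma chordLength_right (m k : ℕ) (v u : List Bool) (hv : IsDyckWord v m) (hu : IsDyckWord u k)
    (c : ℕ × ℕ) (hc : c ∈ chords u) :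
    chordLength (true :: v ++ false :: u) (c.1 + (v.length + 2), c.2 + (v.length + 2)) =
      chordLength u c := by
  classical
  rw [chordLength, chords_decomp m k v u hv hu, Finset.filter_insert,
    if_neg (by simp), Finset.filter_union]
  have e1 : Finset.filter (fun p : ℕ × ℕ => (c.1 + (v.length + 2), c.2 + (v.length + 2)).1 ≤ p.1 ∧
      p.2 ≤ (c.1 + (v.length + 2), c.2 + (v.length + 2)).2)
      ((chords v).image fun p => (p.1 + 1, p.2 + 1)) = ∅ := by
    apply Finset.filter_false_of_mem
    rintro ⟨a, b⟩ hx ⟨h1, h2⟩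
    simp only [Finset.mem_image, Prod.mk.injEq] at hx
    obtain ⟨p, hp, e1, e2⟩ := hx
    have := ((mem_chords v p).1 hp).2.1
    have := ((mem_chords v p).1 hp).1
    simp at h1 h2
    omega
  rw [e1, Finset.empty_union, Finset.filter_image,
    Finset.card_image_of_injective _ (inj_shift (v.length + 2)), chordLength]
  congr 1
  apply Finset.filter_congr
  intro x hx
  simp only [eq_iff_iff]
  constructor
  · rintro ⟨h1, h2⟩
    simp at h1 h2
    exact ⟨by omega, by omega⟩
  · rintro ⟨h1, h2⟩
    simp
    exact ⟨by omega, by omega⟩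

lemma prod_decomp (m k : ℕ) (v u : List Bool) (hv : IsDyckWord v m) (hu : IsDyckWord u k) :
    (∏ c ∈ chords (true :: v ++ false :: u), chordLength (true :: v ++ false :: u) c) =
      (m + 1) * (∏ c ∈ chords v, chordLength v c) * (∏ c ∈ chords u, chordLength u c) := by
  classical
  rw [chords_decomp m k v u hv hu, Finset.prod_insert (notmem_top v u),
    Finset.prod_union (disj_parts v u),
    Finset.prod_image (fun x hx y hy h => inj_shift 1 h),
    Finset.prod_image (fun x hx y hy h => inj_shift (v.length + 2) h),
    chordLength_top m k v u hv hu, card_chords m v hv]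
  rw [Finset.prod_congr rfl (fun c hc => chordLength_left m k v u hv hu c hc),
    Finset.prod_congr rfl (fun c hc => chordLength_right m k v u hv hu c hc)]
  ring

lemma prod_dvd : ∀ n, ∀ w : List Bool, IsDyckWord w n →
    (∏ c ∈ chords w, chordLength w c) ∣ n.factorial := by
  intro n
  induction n using Nat.strong_induction_on with
  | _ n ih =>
    intro w hw
    match n with
    | 0 =>
      have : w = [] := List.eq_nil_of_length_eq_zero (by rw [hw.1])
      subst this
      simp [chords]
    | n + 1 =>
      obtain ⟨m, k, v, u, hmk, hv, hu, rfl⟩ := decomp n w hw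
      rw [prod_decomp m k v u hv hu]
      have h1 := ih m (by omega) v hv
      have h2 := ih k (by omega) u hu
      calc (m + 1) * (∏ c ∈ chords v, chordLength v c) * (∏ c ∈ chords u, chordLength u c)
          ∣ (m + 1) * m.factorial * k.factorial := by
            exact mul_dvd_mul (mul_dvd_mul_left (m + 1) h1) h2
        _ = (m + 1).factorial * k.factorial := by rw [Nat.factorial_succ]
        _ ∣ (m + 1 + k).factorial := Nat.factorial_mul_factorial_dvd_factorial_add _ _
        _ = (n + 1).factorial := by rw [show m + 1 + k = n + 1 by omega]

lemma chordLength_pos (w : List Bool) (c : ℕ × ℕ) (hc : c ∈ chords w) :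
    0 < chordLength w c := by
  classical
  rw [chordLength]
  apply Finset.card_pos.2
  exact ⟨c, Finset.mem_filter.2 ⟨hc, le_refl _, le_refl _⟩⟩

end DyckAux

/-- Hook-length-type formula at `q = 1`: for a Dyck path `λ` of size `n`, the
product of the chord lengths divides `n!`, and the quotient
`n! / ∏_{c ∈ Chord(λ)} l(c)` is a positive integer (it counts cover-inclusive
Dyck tilings above `λ`). -/
theorem factorial_div_prod_chordLength_pos (n : ℕ) (w : List Bool) (hw : IsDyckWord w n) :
    (∏ c ∈ chords w, chordLength w c) ∣ n.factorial ∧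
      0 < n.factorial / ∏ c ∈ chords w, chordLength w c := by
  have hdvd := DyckAux.prod_dvd n w hw
  have hpos : 0 < ∏ c ∈ chords w, chordLength w c :=
    Finset.prod_pos fun c hc => DyckAux.chordLength_pos w c hc
  exact ⟨hdvd, Nat.div_pos (Nat.le_of_dvd n.factorial_pos hdvd) hpos⟩
end

section
/- The generating function Q^B(M,N) := ∏_{1≤i≤N}(1+q^i) · ∏_{1≤j≤M} a_{(j,N)}, where a_{(2m−1,N)} = [N+2m]/[2m] and a_{(2m,N)} = [2N+2m]/[N+2m], is a polynomial in q with nonnegative integer coefficients for all M, N ≥ 0. -/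
/-- The `q`-integer `[n] = 1 + q + ⋯ + q^{n-1}` as an element of `ℚ(q)`. -/
noncomputable def qInt (n : ℕ) : RatFunc ℚ := ∑ i ∈ Finset.range n, RatFunc.X ^ i

/-- The factor `a_{(j,N)}`: for `j = 2m−1` it is `[N+2m]/[2m]` and for `j = 2m`
it is `[2N+2m]/[N+2m]`. -/
noncomputable def aB (j N : ℕ) : RatFunc ℚ :=
  if j % 2 = 1 then qInt (N + j + 1) / qInt (j + 1) else qInt (2 * N + j) / qInt (N + j)

/-- The generating function `Q^B(M,N) = ∏_{1≤i≤N}(1+qⁱ) · ∏_{1≤j≤M} a_{(j,N)}`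
of cover-inclusive ballot tilings above the path `D^M U^N`. -/
noncomputable def QB (M N : ℕ) : RatFunc ℚ :=
  (∏ i ∈ Finset.Icc 1 N, (1 + RatFunc.X ^ i)) * ∏ j ∈ Finset.Icc 1 M, aB j N

/-- The canonical embedding of `ℕ[q]` into `ℚ(q)`. -/
noncomputable def natPolyToRatFunc (p : Polynomial ℕ) : RatFunc ℚ :=
  algebraMap (Polynomial ℚ) (RatFunc ℚ) (p.map (Nat.castRingHom ℚ))

noncomputable def embNat : Polynomial ℕ →+* RatFunc ℚ :=
  (algebraMap (Polynomial ℚ) (RatFunc ℚ)).comp (Polynomial.mapRingHom (Nat.castRingHom ℚ))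

lemma natPolyToRatFunc_eq (p : Polynomial ℕ) : natPolyToRatFunc p = embNat p := rfl

lemma embNat_X : embNat Polynomial.X = RatFunc.X := by
  simp [embNat, RatFunc.algebraMap_X]

lemma qInt_eq (n : ℕ) : qInt n = embNat (∑ i ∈ Finset.range n, Polynomial.X ^ i) := by
  simp [qInt, map_sum, map_pow, embNat_X]

lemma qInt_ne_zero {n : ℕ} (h : 0 < n) : qInt n ≠ 0 := by
  have : qInt n = algebraMap (Polynomial ℚ) (RatFunc ℚ) (∑ i ∈ Finset.range n, Polynomial.X ^ i) := by
    simp [qInt, map_sum, map_pow, RatFunc.algebraMap_X]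
  rw [this]
  apply RatFunc.algebraMap_ne_zero
  intro hz
  have := congrArg (Polynomial.eval 1) hz
  simp [Polynomial.eval_finset_sum] at this
  omega

lemma qInt_add (a b : ℕ) : qInt (a + b) = qInt a + RatFunc.X ^ a * qInt b := by
  unfold qInt
  rw [Finset.sum_range_add, Finset.mul_sum]
  congr 1
  exact Finset.sum_congr rfl fun i _ => (pow_add _ _ _)

lemma qInt_double (n : ℕ) : qInt (2 * n) = (1 + RatFunc.X ^ n) * qInt n := by
  rw [two_mul, qInt_add]; ring

lemma aB_odd (m N : ℕ) : aB (2 * m + 1) N = qInt (N + 2 * m + 2) / qInt (2 * m + 2) := by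
  have h : (2 * m + 1) % 2 = 1 := by omega
  have h2 : N + (2 * m + 1) + 1 = N + 2 * m + 2 := by omega
  simp only [aB, h, if_pos, h2]

lemma aB_even (m N : ℕ) : aB (2 * m + 2) N = qInt (2 * N + 2 * m + 2) / qInt (N + 2 * m + 2) := by
  have h : ¬ (2 * m + 2) % 2 = 1 := by omega
  have h2 : 2 * N + (2 * m + 2) = 2 * N + 2 * m + 2 := by omega
  have h3 : N + (2 * m + 2) = N + 2 * m + 2 := by omega
  rw [aB, if_neg h, h2, h3]

lemma A_even (m N : ℕ) :
    (∏ j ∈ Finset.Icc 1 (2 * m), aB j N)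
      = ∏ k ∈ Finset.range m, (qInt (2 * N + 2 * k + 2) / qInt (2 * k + 2)) := by
  induction m with
  | zero => simp
  | succ m ih =>
    have e1 : 2 * (m + 1) = (2 * m + 1) + 1 := by omega
    rw [e1, Finset.prod_Icc_succ_top (by omega : 1 ≤ 2 * m + 1 + 1),
      Finset.prod_Icc_succ_top (by omega : 1 ≤ 2 * m + 1), ih, Finset.prod_range_succ]
    have h1 : (2 * m + 1) + 1 = 2 * m + 2 := by omega
    rw [h1, aB_odd, aB_even]
    have hz1 := qInt_ne_zero (by omega : 0 < N + 2 * m + 2)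
    have hz2 := qInt_ne_zero (by omega : 0 < 2 * m + 2)
    have hP : (∏ k ∈ Finset.range m, qInt (2 * k + 2)) ≠ 0 :=
      Finset.prod_ne_zero_iff.mpr fun k _ => qInt_ne_zero (by omega)
    field_simp


lemma star (m N : ℕ) :
    (∏ i ∈ Finset.Icc 1 (N + 1), (1 + RatFunc.X ^ i))
        * (∏ j ∈ Finset.Icc 1 (2 * m), aB j (N + 1)) * qInt (N + 1)
      = qInt (2 * m + 2) * (∏ i ∈ Finset.Icc 1 N, (1 + RatFunc.X ^ i))
        * (∏ j ∈ Finset.Icc 1 (2 * m + 2), aB j N) := by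
  set F := ∏ k ∈ Finset.range m, qInt (2 * N + 2 * k + 4) with hF
  set D := ∏ k ∈ Finset.range m, qInt (2 * k + 2) with hD
  have h1 : (∏ j ∈ Finset.Icc 1 (2 * m), aB j (N + 1)) = F / D := by
    rw [A_even m (N + 1), Finset.prod_div_distrib]
    congr 1
    refine Finset.prod_congr rfl fun k _ => ?_
    have : 2 * (N + 1) + 2 * k + 2 = 2 * N + 2 * k + 4 := by omega
    rw [this]
  have h2 : (∏ j ∈ Finset.Icc 1 (2 * m + 2), aB j N)
      = (qInt (2 * (N + 1)) * F) / (D * qInt (2 * m + 2)) := by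
    have e1 : 2 * m + 2 = 2 * (m + 1) := by omega
    rw [e1, A_even (m + 1) N, Finset.prod_div_distrib, Finset.prod_range_succ',
      Finset.prod_range_succ]
    have ha : (∏ k ∈ Finset.range m, qInt (2 * N + 2 * (k + 1) + 2)) = F := by
      refine Finset.prod_congr rfl fun k _ => ?_
      have : 2 * N + 2 * (k + 1) + 2 = 2 * N + 2 * k + 4 := by omega
      rw [this]
    have hb : 2 * N + 2 * 0 + 2 = 2 * (N + 1) := by omega
    have hc : 2 * m + 2 = 2 * (m + 1) := by omega
    rw [ha, hb, ← hc]
    ring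
  have hPi : (∏ i ∈ Finset.Icc 1 (N + 1), ((1 : RatFunc ℚ) + RatFunc.X ^ i))
      = (∏ i ∈ Finset.Icc 1 N, (1 + RatFunc.X ^ i)) * (1 + RatFunc.X ^ (N + 1)) := by
    rw [Finset.prod_Icc_succ_top (by omega : 1 ≤ N + 1)]
  have hdb : qInt (2 * (N + 1)) = (1 + RatFunc.X ^ (N + 1)) * qInt (N + 1) := qInt_double _
  have hDz : D ≠ 0 := Finset.prod_ne_zero_iff.mpr fun k _ => qInt_ne_zero (by omega)
  have hz2 := qInt_ne_zero (by omega : 0 < 2 * m + 2)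
  rw [h1, h2, hPi, hdb]
  field_simp

lemma key_div (m N : ℕ) :
    (∏ i ∈ Finset.Icc 1 (N + 1), (1 + RatFunc.X ^ i))
        * (∏ j ∈ Finset.Icc 1 (2 * m), aB j (N + 1)) * qInt (N + 1) / qInt (2 * m + 2)
      = (∏ i ∈ Finset.Icc 1 N, (1 + RatFunc.X ^ i))
        * (∏ j ∈ Finset.Icc 1 (2 * m + 2), aB j N) := by
  rw [div_eq_iff (qInt_ne_zero (by omega : 0 < 2 * m + 2)), star]
  ring

lemma QB_rec_odd (m N : ℕ) :
    QB (2 * m + 1) (N + 1) = QB (2 * m) (N + 1) + RatFunc.X ^ (2 * m + 2) * QB (2 * m + 2) N := by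
  unfold QB
  rw [Finset.prod_Icc_succ_top (by omega : 1 ≤ 2 * m + 1), aB_odd]
  have e1 : N + 1 + 2 * m + 2 = (2 * m + 2) + (N + 1) := by omega
  rw [e1, qInt_add]
  have hz := qInt_ne_zero (by omega : 0 < 2 * m + 2)
  have hk := key_div m N
  rw [div_eq_iff hz] at hk
  field_simp
  linear_combination RatFunc.X ^ (2 * m + 2) * hk


lemma QB_rec_even (m N : ℕ) :
    QB (2 * m + 2) (N + 1)
      = QB (2 * m + 1) (N + 1) + RatFunc.X ^ (N + 1 + 2 * m + 2) * QB (2 * m + 2) N := by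
  unfold QB
  rw [show 2 * m + 2 = (2 * m + 1) + 1 from rfl,
    Finset.prod_Icc_succ_top (by omega : 1 ≤ 2 * m + 1 + 1),
    Finset.prod_Icc_succ_top (by omega : 1 ≤ 2 * m + 1),
    show (2 * m + 1) + 1 = 2 * m + 2 from rfl, aB_odd, aB_even]
  have hz := qInt_ne_zero (by omega : 0 < 2 * m + 2)
  have hzN := qInt_ne_zero (by omega : 0 < N + 1 + 2 * m + 2)
  have hmul : (qInt (N + 1 + 2 * m + 2) / qInt (2 * m + 2))
      * (qInt (2 * (N + 1) + 2 * m + 2) / qInt (N + 1 + 2 * m + 2))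
      = qInt (2 * (N + 1) + 2 * m + 2) / qInt (2 * m + 2) := by
    field_simp
  rw [mul_assoc (∏ j ∈ Finset.Icc 1 (2 * m), aB j (N + 1)), hmul]
  have e1 : 2 * (N + 1) + 2 * m + 2 = (N + 1 + 2 * m + 2) + (N + 1) := by omega
  rw [e1, qInt_add]
  have hq := key_div m N
  rw [← hq]
  field_simp

lemma QB_zero_right (M : ℕ) : QB M 0 = 1 := by
  unfold QB
  rw [show Finset.Icc 1 0 = ∅ from rfl, Finset.prod_empty, one_mul]
  refine Finset.prod_eq_one fun j hj => ?_
  have hj1 : 1 ≤ j := (Finset.mem_Icc.mp hj).1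
  unfold aB
  rcases Nat.even_or_odd j with ⟨r, hr⟩ | ⟨r, hr⟩
  · have h : ¬ j % 2 = 1 := by omega
    rw [if_neg h, show 2 * 0 + j = j by omega]
    exact div_self (qInt_ne_zero (by omega))
  · have h : j % 2 = 1 := by omega
    rw [if_pos h, show 0 + j + 1 = j + 1 by omega]
    exact div_self (qInt_ne_zero (by omega))

lemma QB_zero_left (N : ℕ) : ∃ p : Polynomial ℕ, QB 0 N = natPolyToRatFunc p := by
  refine ⟨∏ i ∈ Finset.Icc 1 N, (1 + Polynomial.X ^ i), ?_⟩
  unfold QB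
  rw [show Finset.Icc 1 0 = ∅ from rfl, Finset.prod_empty, mul_one,
    natPolyToRatFunc_eq, map_prod]
  exact Finset.prod_congr rfl fun i _ => by rw [map_add, map_one, map_pow, embNat_X]

lemma comb {a b c : RatFunc ℚ} {k : ℕ} (h : c = a + RatFunc.X ^ k * b)
    (hp : ∃ p, a = natPolyToRatFunc p) (hq : ∃ p, b = natPolyToRatFunc p) :
    ∃ p, c = natPolyToRatFunc p := by
  obtain ⟨p, hp⟩ := hp
  obtain ⟨q, hq⟩ := hq
  refine ⟨p + Polynomial.X ^ k * q, ?_⟩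
  rw [h, hp, hq, natPolyToRatFunc_eq, natPolyToRatFunc_eq, natPolyToRatFunc_eq,
    map_add, map_mul, map_pow, embNat_X]

/-- For all `M, N ≥ 0`, the generating function `Q^B(M,N)` is a polynomial in `q`
with nonnegative integer coefficients. -/
theorem QB_is_natPoly (M N : ℕ) : ∃ p : Polynomial ℕ, QB M N = natPolyToRatFunc p := by
  induction N generalizing M with
  | zero =>
    exact ⟨1, by rw [QB_zero_right, natPolyToRatFunc_eq, map_one]⟩
  | succ N ih =>
    have hpair : ∀ m : ℕ, (∃ p, QB (2 * m) (N + 1) = natPolyToRatFunc p)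
        ∧ (∃ p, QB (2 * m + 1) (N + 1) = natPolyToRatFunc p) := by
      intro m
      induction m with
      | zero =>
        refine ⟨QB_zero_left (N + 1), ?_⟩
        exact comb (QB_rec_odd 0 N) (QB_zero_left (N + 1)) (ih 2)
      | succ m ihm =>
        have heven : ∃ p, QB (2 * (m + 1)) (N + 1) = natPolyToRatFunc p := by
          rw [show 2 * (m + 1) = 2 * m + 2 by omega]
          exact comb (QB_rec_even m N) ihm.2 (ih (2 * m + 2))
        refine ⟨heven, ?_⟩
        have h := QB_rec_odd (m + 1) N
        rw [show 2 * (m + 1) + 2 = 2 * (m + 2) by omega] at h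
        exact comb h heven (ih (2 * (m + 2)))
    rcases Nat.even_or_odd M with ⟨k, hk⟩ | ⟨k, hk⟩
    · rw [hk, show k + k = 2 * k by omega]
      exact (hpair k).1
    · rw [hk]
      exact (hpair k).2
end
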